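/- There is no constant c > 0 such that Var(X) ≤ c · e^{2h(p)} for all symmetric unimodal densities p: for the two-component uniform mixture p = α₁ unif(-1/(2ε₁),1/(2ε₁)) + α₂ unif(-1/(2ε₂),1/(2ε₂)) with fixed α₁,α₂ ∈ (0,1), α₁+α₂=1, fixed ε₁>0, the ratio Var(X)/e^{2h(p)} tends to ∞ as ε₂ → 0. -/

import Mathlib

open MeasureTheory Real Filter Set

/-- Two-component uniform mixture density centered at `0`. -/
noncomputable def pmix (α₁ α₂ ε₁ ε₂ : ℝ) (x : ℝ) : ℝ :=
  α₁ * (if |x| ≤ 1 / (2 * ε₁) then ε₁ else 0) +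
    α₂ * (if |x| ≤ 1 / (2 * ε₂) then ε₂ else 0)

lemma aux_int_Icc (a : ℝ) (ha : 0 ≤ a) (f : ℝ → ℝ) :
    ∫ x : ℝ, (Icc (-a) a).indicator f x = ∫ x in (-a)..a, f x := by
  rw [MeasureTheory.integral_indicator measurableSet_Icc,
    MeasureTheory.integral_Icc_eq_integral_Ioc,
    intervalIntegral.integral_of_le (by linarith)]

lemma aux_integrable (a : ℝ) (f : ℝ → ℝ) (hf : Continuous f) :
    Integrable ((Icc (-a) a).indicator f) := by
  exact (hf.integrableOn_Icc).integrable_indicator measurableSet_Icc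

lemma aux_int_sq (a c : ℝ) (ha : 0 ≤ a) :
    ∫ x : ℝ, (Icc (-a) a).indicator (fun y => c * y ^ 2) x = c * (2 * a ^ 3) / 3 := by
  rw [aux_int_Icc a ha, intervalIntegral.integral_const_mul, integral_pow]
  ring

lemma aux_int_const (a c : ℝ) (ha : 0 ≤ a) :
    ∫ x : ℝ, (Icc (-a) a).indicator (fun _ => c) x = c * (2 * a) := by
  rw [MeasureTheory.integral_indicator measurableSet_Icc, setIntegral_const,
    Real.volume_real_Icc_of_le (by linarith), smul_eq_mul]
  ring

/-- No constant scaling of the entropy power can upper bound the variance of all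
symmetric unimodal densities: for the two-component uniform mixture with fixed
weights `α₁, α₂` and fixed `ε₁ > 0`, the ratio `Var(X)/e^{2h(p)}` tends to `∞`
as `ε₂ → 0⁺`. -/
theorem no_uniform_entropy_power_bound (α₁ α₂ ε₁ : ℝ)
    (h1 : 0 < α₁) (h1' : α₁ < 1) (h2 : 0 < α₂) (h2' : α₂ < 1)
    (hsum : α₁ + α₂ = 1) (hε₁ : 0 < ε₁) :
    Filter.Tendsto
      (fun ε₂ : ℝ =>
        (∫ x : ℝ, x ^ 2 * pmix α₁ α₂ ε₁ ε₂ x) /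
          Real.exp (2 * (-∫ x : ℝ, pmix α₁ α₂ ε₁ ε₂ x * Real.log (pmix α₁ α₂ ε₁ ε₂ x))))
      (nhdsWithin 0 (Set.Ioi 0)) Filter.atTop := by
  -- the eventual explicit form:  G t * exp (-(2*α₁) * log t)
  set G : ℝ → ℝ := fun t =>
    (α₁ * t ^ 2 / (12 * ε₁ ^ 2) + α₂ / 12) *
      Real.exp ((2 / ε₁) * ((α₁ * ε₁ + α₂ * t) * Real.log (α₁ * ε₁ + α₂ * t))
        - (2 / ε₁) * ((α₂ * t) * Real.log (α₂ * t)) + 2 * α₂ * Real.log α₂) with hGdef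
  have hGcont : Continuous G := by
    apply Continuous.mul
    · fun_prop
    · apply Real.continuous_exp.comp
      apply Continuous.add
      apply Continuous.sub
      · exact continuous_const.mul (Real.continuous_mul_log.comp (by fun_prop))
      · exact continuous_const.mul (Real.continuous_mul_log.comp (by fun_prop))
      · exact continuous_const
  have hG0 : G 0 = (α₂ / 12) *
      Real.exp ((2 / ε₁) * ((α₁ * ε₁) * Real.log (α₁ * ε₁)) + 2 * α₂ * Real.log α₂) := by
    simp [hGdef]
  have hL : 0 < G 0 := by rw [hG0]; positivity
  have hGlim : Tendsto G (nhdsWithin 0 (Set.Ioi 0)) (nhds (G 0)) :=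
    (hGcont.tendsto 0).mono_left nhdsWithin_le_nhds
  have hexp : Tendsto (fun t : ℝ => Real.exp (-(2 * α₁) * Real.log t))
      (nhdsWithin 0 (Set.Ioi 0)) atTop := by
    apply Real.tendsto_exp_atTop.comp
    have hlog := Real.tendsto_log_nhdsGT_zero
    exact Tendsto.const_mul_atBot_of_neg (by linarith : -(2*α₁) < 0) hlog
  have hmain : Tendsto (fun t => G t * Real.exp (-(2 * α₁) * Real.log t))
      (nhdsWithin 0 (Set.Ioi 0)) atTop :=
    Filter.Tendsto.pos_mul_atTop hL hGlim hexp
  apply hmain.congr'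
  have hmem : Set.Ioo (0:ℝ) ε₁ ∈ nhdsWithin 0 (Set.Ioi 0) :=
    Ioo_mem_nhdsGT_of_mem ⟨le_refl 0, hε₁⟩
  filter_upwards [hmem] with t ht
  obtain ⟨ht0, htε⟩ := ht
  set a₁ := 1 / (2 * ε₁) with ha₁def
  set a₂ := 1 / (2 * t) with ha₂def
  have ha₁ : 0 < a₁ := by positivity
  have ha₂ : 0 < a₂ := by positivity
  have ha₁₂ : a₁ ≤ a₂ := by
    rw [ha₁def, ha₂def]
    apply one_div_le_one_div_of_le (by linarith) (by linarith)
  -- moment integral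
  have hmom : ∫ x : ℝ, x ^ 2 * pmix α₁ α₂ ε₁ t x
      = α₁ / (12 * ε₁ ^ 2) + α₂ / (12 * t ^ 2) := by
    have hfun : (fun x : ℝ => x ^ 2 * pmix α₁ α₂ ε₁ t x)
        = fun x => (Icc (-a₁) a₁).indicator (fun y => (α₁ * ε₁) * y ^ 2) x
          + (Icc (-a₂) a₂).indicator (fun y => (α₂ * t) * y ^ 2) x := by
      funext x
      simp only [pmix, Set.indicator_apply, Set.mem_Icc, ← abs_le, ha₁def, ha₂def]
      split_ifs <;> ring
    rw [hfun, MeasureTheory.integral_add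
        (aux_integrable _ _ (by fun_prop)) (aux_integrable _ _ (by fun_prop)),
      aux_int_sq _ _ ha₁.le, aux_int_sq _ _ ha₂.le, ha₁def, ha₂def]
    field_simp
    ring
  -- entropy integral
  set A := α₁ * ε₁ + α₂ * t with hAdef
  set B := α₂ * t with hBdef
  have hent : ∫ x : ℝ, pmix α₁ α₂ ε₁ t x * Real.log (pmix α₁ α₂ ε₁ t x)
      = (A * Real.log A - B * Real.log B) * (2 * a₁) + (B * Real.log B) * (2 * a₂) := by
    have hfun : (fun x : ℝ => pmix α₁ α₂ ε₁ t x * Real.log (pmix α₁ α₂ ε₁ t x))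
        = fun x => (Icc (-a₁) a₁).indicator (fun _ => A * Real.log A - B * Real.log B) x
          + (Icc (-a₂) a₂).indicator (fun _ => B * Real.log B) x := by
      funext x
      simp only [pmix, Set.indicator_apply, Set.mem_Icc, ← abs_le, ha₁def, ha₂def,
        hAdef, hBdef]
      split_ifs with hx1 hx2 hx2
      · ring
      · exact absurd (hx1.trans ha₁₂) hx2
      · simp
      · simp
    rw [hfun, MeasureTheory.integral_add
        (aux_integrable _ _ continuous_const) (aux_integrable _ _ continuous_const),
      aux_int_const _ _ ha₁.le, aux_int_const _ _ ha₂.le]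
  -- algebra
  have hexp2 : Real.exp (2 * Real.log t) = t ^ 2 := by
    rw [two_mul, Real.exp_add, Real.exp_log ht0]; ring
  have hBlog : B * Real.log B * (2 * a₂) = α₂ * Real.log α₂ + α₂ * Real.log t := by
    rw [hBdef, Real.log_mul (ne_of_gt h2) (ne_of_gt ht0), ha₂def]
    field_simp
  have e1 : 2 * a₁ = 1 / ε₁ := by
    rw [ha₁def]; field_simp
  have hα : α₂ = 1 - α₁ := by linarith
  have key : 2 * ((A * Real.log A - B * Real.log B) * (2 * a₁)
        + (B * Real.log B) * (2 * a₂))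
      = ((2 / ε₁) * (A * Real.log A) - (2 / ε₁) * (B * Real.log B) + 2 * α₂ * Real.log α₂)
        + (-(2 * α₁) * Real.log t + 2 * Real.log t) := by
    linear_combination (2 * (A * Real.log A - B * Real.log B)) * e1 + 2 * hBlog
      + (2 * Real.log t) * hα
  have hexp3 : Real.exp (-(2 * α₁) * Real.log t + 2 * Real.log t)
      = Real.exp (-(2 * α₁) * Real.log t) * t ^ 2 := by
    rw [Real.exp_add, hexp2]
  symm
  rw [hmom, hent, mul_neg, Real.exp_neg, div_inv_eq_mul, key, Real.exp_add, hexp3, hGdef]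
  have halg : (α₁ / (12 * ε₁ ^ 2) + α₂ / (12 * t ^ 2)) * t ^ 2
      = α₁ * t ^ 2 / (12 * ε₁ ^ 2) + α₂ / 12 := by
    field_simp
  calc (α₁ / (12 * ε₁ ^ 2) + α₂ / (12 * t ^ 2)) *
        (Real.exp ((2 / ε₁) * (A * Real.log A) - (2 / ε₁) * (B * Real.log B)
            + 2 * α₂ * Real.log α₂) * (Real.exp (-(2 * α₁) * Real.log t) * t ^ 2))
      = ((α₁ / (12 * ε₁ ^ 2) + α₂ / (12 * t ^ 2)) * t ^ 2) *
        Real.exp ((2 / ε₁) * (A * Real.log A) - (2 / ε₁) * (B * Real.log B)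
            + 2 * α₂ * Real.log α₂) * Real.exp (-(2 * α₁) * Real.log t) := by ring
    _ = _ := by rw [halg, hAdef, hBdef]
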